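/- The improper integrals ∫_{−1}^∞ (z³+1)^{−1/2} dz and ∫_{1}^∞ (z³−1)^{−1/2} dz converge, and with p* := (4/(9π³))·Γ(1/4)⁴ one has the closed-form evaluations (1/2)·p*^{−2/3}·∫_{−1}^∞ (z³+1)^{−1/2} dz = 3·(3/2)^{1/3}·π^{5/2}·Γ(1/3) / (4·Γ(1/4)^{8/3}·Γ(5/6)) and (1/2)·p*^{−2/3}·∫_{1}^∞ (z³−1)^{−1/2} dz = 3·(3/2)^{1/3}·π^{5/2}·Γ(7/6) / (2·Γ(1/4)^{8/3}·Γ(2/3)), where Γ is the Gamma function. -/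

import Mathlib

noncomputable section

open Real MeasureTheory Set

/-- The normalising constant `p* = (4/(9π³))·Γ(1/4)⁴`. -/
def pStar : ℝ := (4 / (9 * π ^ 3)) * Real.Gamma (1 / 4) ^ 4

lemma beta_complex_eq (a b : ℝ) (ha : 0 < a) (hb : 0 < b) :
    Complex.betaIntegral a b =
      ((∫ x in Ioo (0:ℝ) 1, x ^ (a-1) * (1-x) ^ (b-1) : ℝ) : ℂ) := by
  rw [Complex.betaIntegral]
  have hcast : ((∫ t in Ioc (0:ℝ) 1, t ^ (a-1) * (1-t) ^ (b-1) : ℝ) : ℂ)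
      = ∫ t in Ioc (0:ℝ) 1, ((t ^ (a-1) * (1-t) ^ (b-1) : ℝ) : ℂ) :=
    (integral_ofReal (𝕜 := ℂ)).symm
  rw [intervalIntegral.integral_of_le zero_le_one, ← integral_Ioc_eq_integral_Ioo, hcast]
  refine setIntegral_congr_fun measurableSet_Ioc (fun x hx => ?_)
  have hx0 : (0:ℝ) ≤ x := le_of_lt hx.1
  have hx1 : (0:ℝ) ≤ 1 - x := by linarith [hx.2]
  rw [Complex.ofReal_mul, Complex.ofReal_cpow hx0, Complex.ofReal_cpow hx1]
  push_cast
  ring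

lemma beta_integrable (a b : ℝ) (ha : 0 < a) (hb : 0 < b) :
    IntegrableOn (fun x : ℝ => x ^ (a-1) * (1-x) ^ (b-1)) (Ioo (0:ℝ) 1) := by
  have h := Complex.betaIntegral_convergent (u := a) (v := b) (by simpa) (by simpa)
  have h2 : IntegrableOn (fun x : ℝ => ((x:ℂ) ^ ((a:ℂ)-1) * ((1:ℂ)-x) ^ ((b:ℂ)-1))) (Ioo (0:ℝ) 1) := by
    have := (intervalIntegrable_iff_integrableOn_Ioo_of_le zero_le_one).mp h
    exact this
  have h3 : IntegrableOn (fun x : ℝ => (((x ^ (a-1) * (1-x) ^ (b-1) : ℝ)) : ℂ)) (Ioo (0:ℝ) 1) := by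
    refine h2.congr_fun (fun x hx => ?_) measurableSet_Ioo
    have hx0 : (0:ℝ) ≤ x := le_of_lt hx.1
    have hx1 : (0:ℝ) ≤ 1 - x := by linarith [hx.2]
    rw [Complex.ofReal_mul, Complex.ofReal_cpow hx0, Complex.ofReal_cpow hx1]
    push_cast; ring
  simpa [IntegrableOn] using h3.re

lemma beta_eval (a b : ℝ) (ha : 0 < a) (hb : 0 < b) :
    ∫ x in Ioo (0:ℝ) 1, x ^ (a-1) * (1-x) ^ (b-1)
      = Real.Gamma a * Real.Gamma b / Real.Gamma (a+b) := by
  have h := Complex.Gamma_mul_Gamma_eq_betaIntegral (s := a) (t := b) (by simpa) (by simpa)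
  rw [beta_complex_eq a b ha hb] at h
  have hab : ((a:ℂ) + b) = ((a + b : ℝ) : ℂ) := by push_cast; ring
  rw [hab, Complex.Gamma_ofReal, Complex.Gamma_ofReal, Complex.Gamma_ofReal] at h
  have h' : Real.Gamma a * Real.Gamma b
      = Real.Gamma (a+b) * ∫ x in Ioo (0:ℝ) 1, x ^ (a-1) * (1-x) ^ (b-1) := by
    exact_mod_cast h
  have hG : Real.Gamma (a+b) ≠ 0 := (Real.Gamma_pos_of_pos (by linarith)).ne'
  field_simp [hG] at h' ⊢
  linarith [h']

lemma sub2_image :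
    (fun u : ℝ => u ^ (-(1:ℝ)/3)) '' (Ioo (0:ℝ) 1) = Ioi (1:ℝ) := by
  ext y
  simp only [mem_image, mem_Ioi]
  constructor
  · rintro ⟨u, hu, rfl⟩
    rw [Real.one_lt_rpow_iff_of_pos hu.1]
    exact Or.inr ⟨hu.2, by norm_num⟩
  · intro hy
    have hy0 : (0:ℝ) < y := by linarith
    refine ⟨y ^ (-(3:ℝ)), ⟨Real.rpow_pos_of_pos hy0 _,
      Real.rpow_lt_one_of_one_lt_of_neg hy (by norm_num)⟩, ?_⟩
    rw [← Real.rpow_mul hy0.le]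
    norm_num

lemma sub2_inj : Set.InjOn (fun u : ℝ => u ^ (-(1:ℝ)/3)) (Ioo (0:ℝ) 1) :=
  fun u hu v hv h => Real.rpow_left_injOn (by norm_num : (-(1:ℝ)/3) ≠ 0) hu.1.le hv.1.le h

lemma sub2_deriv : ∀ u ∈ Ioo (0:ℝ) 1, HasDerivWithinAt (fun u : ℝ => u ^ (-(1:ℝ)/3))
    ((-(1:ℝ)/3) * u ^ ((-(1:ℝ)/3) - 1)) (Ioo (0:ℝ) 1) u :=
  fun u hu => (Real.hasDerivAt_rpow_const (Or.inl hu.1.ne')).hasDerivWithinAt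

lemma sub2_pointwise : ∀ u ∈ Ioo (0:ℝ) 1,
    |(-(1:ℝ)/3) * u ^ ((-(1:ℝ)/3) - 1)| •
      (1 / Real.sqrt ((u ^ (-(1:ℝ)/3)) ^ 3 - 1))
    = (1/3) * (u ^ ((1:ℝ)/6 - 1) * (1-u) ^ ((1:ℝ)/2 - 1)) := by
  intro u hu
  obtain ⟨hu0, hu1⟩ := hu
  have h1u : (0:ℝ) < 1 - u := by linarith
  have hcube : (u ^ (-(1:ℝ)/3)) ^ (3:ℕ) = u⁻¹ := by
    rw [← Real.rpow_natCast (u ^ (-(1:ℝ)/3)) 3, ← Real.rpow_mul hu0.le]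
    norm_num [Real.rpow_neg_one]
  have hw : (u ^ (-(1:ℝ)/3)) ^ (3:ℕ) - 1 = (1-u)/u := by
    rw [hcube]; field_simp
  have habs : |(-(1:ℝ)/3) * u ^ ((-(1:ℝ)/3) - 1)| = (1/3) * u ^ ((-(1:ℝ)/3) - 1) := by
    rw [abs_mul, abs_of_pos (Real.rpow_pos_of_pos hu0 _)]
    norm_num
  have h5 : u ^ (-(1:ℝ)/3 - 1) * Real.sqrt u = u ^ ((1:ℝ)/6 - 1) := by
    rw [Real.sqrt_eq_rpow, ← Real.rpow_add hu0]; norm_num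
  have h6 : (1-u) ^ ((1:ℝ)/2 - 1) = (Real.sqrt (1-u))⁻¹ := by
    rw [show (1:ℝ)/2 - 1 = -(1/2) by norm_num, Real.rpow_neg h1u.le, Real.sqrt_eq_rpow]
  rw [hw, smul_eq_mul, habs, Real.sqrt_div h1u.le, one_div_div, h6, div_eq_mul_inv]
  linear_combination ((1:ℝ)/3) * (Real.sqrt (1-u))⁻¹ * h5

lemma case2 : IntegrableOn (fun z : ℝ => 1 / Real.sqrt (z ^ 3 - 1)) (Ioi (1:ℝ)) ∧
    ∫ z in Ioi (1:ℝ), 1 / Real.sqrt (z ^ 3 - 1)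
      = (1/3) * (Real.Gamma (1/6) * Real.Gamma (1/2) / Real.Gamma (1/6 + 1/2)) := by
  set g : ℝ → ℝ := fun z => 1 / Real.sqrt (z ^ 3 - 1) with hg
  have hI : IntegrableOn (fun u : ℝ =>
      |(-(1:ℝ)/3) * u ^ ((-(1:ℝ)/3) - 1)| • g (u ^ (-(1:ℝ)/3))) (Ioo (0:ℝ) 1) := by
    exact IntegrableOn.congr_fun ((beta_integrable (1/6) (1/2) (by norm_num)
        (by norm_num)).const_mul ((1:ℝ)/3))
      (fun u hu => (sub2_pointwise u hu).symm) measurableSet_Ioo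
  constructor
  · rw [← sub2_image,
      integrableOn_image_iff_integrableOn_abs_deriv_smul measurableSet_Ioo sub2_deriv sub2_inj]
    exact hI
  · have key := integral_image_eq_integral_abs_deriv_smul measurableSet_Ioo sub2_deriv sub2_inj g
    rw [sub2_image] at key
    rw [key]
    rw [setIntegral_congr_fun measurableSet_Ioo (fun u hu => sub2_pointwise u hu)]
    rw [integral_const_mul, beta_eval (1/6) (1/2) (by norm_num) (by norm_num)]

lemma subA_image :
    (fun t : ℝ => -(t ^ ((1:ℝ)/3))) '' (Ioo (0:ℝ) 1) = Ioo (-1:ℝ) 0 := by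
  ext y
  simp only [mem_image, mem_Ioo]
  constructor
  · rintro ⟨t, ht, rfl⟩
    have h1 : (0:ℝ) < t ^ ((1:ℝ)/3) := Real.rpow_pos_of_pos ht.1 _
    have h2 : t ^ ((1:ℝ)/3) < 1 := Real.rpow_lt_one ht.1.le ht.2 (by norm_num)
    constructor <;> linarith
  · rintro ⟨hy1, hy0⟩
    have hny : (0:ℝ) < -y := by linarith
    have hny1 : -y < 1 := by linarith
    refine ⟨(-y) ^ ((3:ℝ)), ⟨Real.rpow_pos_of_pos hny _,
      Real.rpow_lt_one hny.le hny1 (by norm_num)⟩, ?_⟩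
    rw [← Real.rpow_mul hny.le]
    norm_num

lemma subA_inj : Set.InjOn (fun t : ℝ => -(t ^ ((1:ℝ)/3))) (Ioo (0:ℝ) 1) := by
  intro u hu v hv h
  simp only [neg_inj] at h
  exact Real.rpow_left_injOn (by norm_num : ((1:ℝ)/3) ≠ 0) hu.1.le hv.1.le h

lemma subA_deriv : ∀ t ∈ Ioo (0:ℝ) 1, HasDerivWithinAt (fun t : ℝ => -(t ^ ((1:ℝ)/3)))
    (-(((1:ℝ)/3) * t ^ ((1:ℝ)/3 - 1))) (Ioo (0:ℝ) 1) t :=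
  fun t ht => ((Real.hasDerivAt_rpow_const (Or.inl ht.1.ne')).neg).hasDerivWithinAt

lemma subA_pointwise : ∀ t ∈ Ioo (0:ℝ) 1,
    |(-(((1:ℝ)/3) * t ^ ((1:ℝ)/3 - 1)))| •
      (1 / Real.sqrt ((-(t ^ ((1:ℝ)/3))) ^ 3 + 1))
    = (1/3) * (t ^ ((1:ℝ)/3 - 1) * (1-t) ^ ((1:ℝ)/2 - 1)) := by
  intro t ht
  obtain ⟨ht0, ht1⟩ := ht
  have h1t : (0:ℝ) < 1 - t := by linarith
  have hcube : (-(t ^ ((1:ℝ)/3))) ^ (3:ℕ) + 1 = 1 - t := by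
    rw [Odd.neg_pow (by decide : Odd 3)]
    rw [← Real.rpow_natCast (t ^ ((1:ℝ)/3)) 3, ← Real.rpow_mul ht0.le]
    norm_num
    ring
  have habs : |(-(((1:ℝ)/3) * t ^ ((1:ℝ)/3 - 1)))| = (1/3) * t ^ ((1:ℝ)/3 - 1) := by
    rw [abs_neg, abs_mul, abs_of_pos (Real.rpow_pos_of_pos ht0 _)]
    norm_num
  have h6 : (1-t) ^ ((1:ℝ)/2 - 1) = (Real.sqrt (1-t))⁻¹ := by
    rw [show (1:ℝ)/2 - 1 = -(1/2) by norm_num, Real.rpow_neg h1t.le, Real.sqrt_eq_rpow]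
  rw [hcube, smul_eq_mul, habs, h6, one_div]
  ring

lemma caseA : IntegrableOn (fun z : ℝ => 1 / Real.sqrt (z ^ 3 + 1)) (Ioo (-1:ℝ) 0) ∧
    ∫ z in Ioo (-1:ℝ) 0, 1 / Real.sqrt (z ^ 3 + 1)
      = (1/3) * (Real.Gamma (1/3) * Real.Gamma (1/2) / Real.Gamma (1/3 + 1/2)) := by
  set g : ℝ → ℝ := fun z => 1 / Real.sqrt (z ^ 3 + 1) with hg
  have hI : IntegrableOn (fun t : ℝ =>
      |(-(((1:ℝ)/3) * t ^ ((1:ℝ)/3 - 1)))| • g (-(t ^ ((1:ℝ)/3)))) (Ioo (0:ℝ) 1) :=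
    IntegrableOn.congr_fun ((beta_integrable (1/3) (1/2) (by norm_num)
        (by norm_num)).const_mul ((1:ℝ)/3))
      (fun t ht => (subA_pointwise t ht).symm) measurableSet_Ioo
  constructor
  · rw [← subA_image,
      integrableOn_image_iff_integrableOn_abs_deriv_smul measurableSet_Ioo subA_deriv subA_inj]
    exact hI
  · have key := integral_image_eq_integral_abs_deriv_smul measurableSet_Ioo subA_deriv subA_inj g
    rw [subA_image] at key
    rw [key, setIntegral_congr_fun measurableSet_Ioo (fun t ht => subA_pointwise t ht),
      integral_const_mul, beta_eval (1/3) (1/2) (by norm_num) (by norm_num)]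

lemma subB_pos {u : ℝ} (hu : u ∈ Ioo (0:ℝ) 1) : 0 < u⁻¹ - 1 := by
  rw [sub_pos]
  exact (one_lt_inv₀ hu.1).mpr hu.2

lemma subB_image :
    (fun u : ℝ => (u⁻¹ - 1) ^ ((1:ℝ)/3)) '' (Ioo (0:ℝ) 1) = Ioi (0:ℝ) := by
  ext y
  simp only [mem_image, mem_Ioi]
  constructor
  · rintro ⟨u, hu, rfl⟩
    exact Real.rpow_pos_of_pos (subB_pos hu) _
  · intro hy
    have h3 : (0:ℝ) < y ^ 3 := by positivity
    have h4 : (1:ℝ) < 1 + y ^ 3 := by linarith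
    refine ⟨(1 + y ^ 3)⁻¹, ⟨by positivity, inv_lt_one_of_one_lt₀ h4⟩, ?_⟩
    rw [inv_inv, add_sub_cancel_left, ← Real.rpow_natCast y 3, ← Real.rpow_mul hy.le]
    norm_num

lemma subB_inj : Set.InjOn (fun u : ℝ => (u⁻¹ - 1) ^ ((1:ℝ)/3)) (Ioo (0:ℝ) 1) := by
  intro u hu v hv h
  have := Real.rpow_left_injOn (by norm_num : ((1:ℝ)/3) ≠ 0)
    (subB_pos hu).le (subB_pos hv).le h
  have h2 : u⁻¹ = v⁻¹ := by linarith [this]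
  exact inv_injective h2

lemma subB_deriv : ∀ u ∈ Ioo (0:ℝ) 1, HasDerivWithinAt (fun u : ℝ => (u⁻¹ - 1) ^ ((1:ℝ)/3))
    (-(u^2)⁻¹ * ((1:ℝ)/3) * (u⁻¹ - 1) ^ ((1:ℝ)/3 - 1)) (Ioo (0:ℝ) 1) u := by
  intro u hu
  have h1 : HasDerivAt (fun u : ℝ => u⁻¹ - 1) (-(u^2)⁻¹) u :=
    (hasDerivAt_inv hu.1.ne').sub_const 1
  exact (h1.rpow_const (Or.inl (subB_pos hu).ne')).hasDerivWithinAt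

lemma subB_pointwise : ∀ u ∈ Ioo (0:ℝ) 1,
    |(-(u^2)⁻¹ * ((1:ℝ)/3) * (u⁻¹ - 1) ^ ((1:ℝ)/3 - 1))| •
      (1 / Real.sqrt (((u⁻¹ - 1) ^ ((1:ℝ)/3)) ^ 3 + 1))
    = (1/3) * (u ^ ((1:ℝ)/6 - 1) * (1-u) ^ ((1:ℝ)/3 - 1)) := by
  intro u hu
  obtain ⟨hu0, hu1⟩ := hu
  have h1u : (0:ℝ) < 1 - u := by linarith
  have hp : 0 < u⁻¹ - 1 := subB_pos ⟨hu0, hu1⟩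
  have hcube : (((u⁻¹ - 1) ^ ((1:ℝ)/3)) ^ (3:ℕ)) + 1 = u⁻¹ := by
    rw [← Real.rpow_natCast ((u⁻¹ - 1) ^ ((1:ℝ)/3)) 3, ← Real.rpow_mul hp.le]
    norm_num
  have hsqrt : 1 / Real.sqrt u⁻¹ = u ^ ((1:ℝ)/2) := by
    rw [Real.sqrt_inv, one_div, inv_inv, Real.sqrt_eq_rpow]
  have habs : |(-(u^2)⁻¹ * ((1:ℝ)/3) * (u⁻¹ - 1) ^ ((1:ℝ)/3 - 1))|
      = (u^2)⁻¹ * ((1:ℝ)/3) * (u⁻¹ - 1) ^ ((1:ℝ)/3 - 1) := by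
    rw [abs_mul, abs_mul]
    rw [abs_of_pos (Real.rpow_pos_of_pos hp _), abs_neg, abs_of_pos (by positivity : (0:ℝ) < (u^2)⁻¹)]
    norm_num
  have hA : (u⁻¹ - 1) ^ ((1:ℝ)/3 - 1) = (1-u) ^ ((1:ℝ)/3 - 1) * u ^ (-((1:ℝ)/3 - 1)) := by
    rw [show u⁻¹ - 1 = (1-u)/u by field_simp, Real.div_rpow h1u.le hu0.le,
      Real.rpow_neg hu0.le, div_eq_mul_inv, ← Real.rpow_neg hu0.le, Real.rpow_neg hu0.le]
  have hu2 : ((u^2)⁻¹ : ℝ) = u ^ (-(2:ℝ)) := by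
    rw [← Real.rpow_natCast u 2, ← Real.rpow_neg hu0.le]
    norm_num
  have hcomb : u ^ (-(2:ℝ)) * u ^ (-((1:ℝ)/3 - 1)) * u ^ ((1:ℝ)/2) = u ^ ((1:ℝ)/6 - 1) := by
    rw [← Real.rpow_add hu0, ← Real.rpow_add hu0]
    norm_num
  rw [hcube, smul_eq_mul, habs, hsqrt, hA, hu2]
  linear_combination ((1:ℝ)/3) * (1-u) ^ ((1:ℝ)/3 - 1) * hcomb

lemma caseB : IntegrableOn (fun z : ℝ => 1 / Real.sqrt (z ^ 3 + 1)) (Ioi (0:ℝ)) ∧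
    ∫ z in Ioi (0:ℝ), 1 / Real.sqrt (z ^ 3 + 1)
      = (1/3) * (Real.Gamma (1/6) * Real.Gamma (1/3) / Real.Gamma (1/6 + 1/3)) := by
  set g : ℝ → ℝ := fun z => 1 / Real.sqrt (z ^ 3 + 1) with hg
  have hI : IntegrableOn (fun u : ℝ =>
      |(-(u^2)⁻¹ * ((1:ℝ)/3) * (u⁻¹ - 1) ^ ((1:ℝ)/3 - 1))| • g ((u⁻¹ - 1) ^ ((1:ℝ)/3)))
      (Ioo (0:ℝ) 1) :=
    IntegrableOn.congr_fun ((beta_integrable (1/6) (1/3) (by norm_num)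
        (by norm_num)).const_mul ((1:ℝ)/3))
      (fun u hu => (subB_pointwise u hu).symm) measurableSet_Ioo
  constructor
  · rw [← subB_image,
      integrableOn_image_iff_integrableOn_abs_deriv_smul measurableSet_Ioo subB_deriv subB_inj]
    exact hI
  · have key := integral_image_eq_integral_abs_deriv_smul measurableSet_Ioo subB_deriv subB_inj g
    rw [subB_image] at key
    rw [key, setIntegral_congr_fun measurableSet_Ioo (fun u hu => subB_pointwise u hu),
      integral_const_mul, beta_eval (1/6) (1/3) (by norm_num) (by norm_num)]

lemma case1 : IntegrableOn (fun z : ℝ => 1 / Real.sqrt (z ^ 3 + 1)) (Ioi (-1:ℝ)) ∧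
    ∫ z in Ioi (-1:ℝ), 1 / Real.sqrt (z ^ 3 + 1)
      = (1/3) * (Real.Gamma (1/3) * Real.Gamma (1/2) / Real.Gamma (1/3 + 1/2))
        + (1/3) * (Real.Gamma (1/6) * Real.Gamma (1/3) / Real.Gamma (1/6 + 1/3)) := by
  have hunion : Ioc (-1:ℝ) 0 ∪ Ioi (0:ℝ) = Ioi (-1:ℝ) :=
    Ioc_union_Ioi_eq_Ioi (by norm_num)
  have hIoc : IntegrableOn (fun z : ℝ => 1 / Real.sqrt (z ^ 3 + 1)) (Ioc (-1:ℝ) 0) :=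
    caseA.1.congr_set_ae Ioo_ae_eq_Ioc.symm
  have hdisj : Disjoint (Ioc (-1:ℝ) 0) (Ioi (0:ℝ)) := by
    simp [Set.disjoint_left]
  constructor
  · rw [← hunion]
    exact hIoc.union caseB.1
  · rw [← hunion, setIntegral_union hdisj measurableSet_Ioi hIoc caseB.1,
      integral_Ioc_eq_integral_Ioo, caseA.2, caseB.2]


lemma hPow : pStar ^ (-(2:ℝ)/3)
    = (3/2) * ((3/2:ℝ) ^ ((1:ℝ)/3)) * π ^ 2 / (Real.Gamma (1/4) ^ ((8:ℝ)/3)) := by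
  have hpi := Real.pi_pos
  have hG : 0 < Real.Gamma (1/4) := Real.Gamma_pos_of_pos (by norm_num)
  have h1 : pStar ^ (-(2:ℝ)/3)
      = (4 / (9*π^3)) ^ (-(2:ℝ)/3) * (Real.Gamma (1/4)^4) ^ (-(2:ℝ)/3) := by
    rw [pStar, Real.mul_rpow (by positivity) (by positivity)]
  have h2 : (Real.Gamma (1/4)^4 : ℝ) ^ (-(2:ℝ)/3) = (Real.Gamma (1/4) ^ ((8:ℝ)/3))⁻¹ := by
    rw [← Real.rpow_natCast (Real.Gamma (1/4)) 4, ← Real.rpow_mul hG.le,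
      show ((4:ℕ):ℝ) * (-(2:ℝ)/3) = -((8:ℝ)/3) by norm_num, Real.rpow_neg hG.le]
  have h3 : (4 / (9*π^3) : ℝ) ^ (-(2:ℝ)/3) = (3/2) * ((3/2:ℝ) ^ ((1:ℝ)/3)) * π^2 := by
    rw [show (4 / (9*π^3) : ℝ) = ((9/4) * π^3)⁻¹ by field_simp,
      Real.inv_rpow (by positivity), show (-(2:ℝ)/3) = -((2:ℝ)/3) by norm_num,
      Real.rpow_neg (by positivity), inv_inv,
      Real.mul_rpow (by norm_num) (by positivity)]
    have e1 : ((9/4:ℝ)) ^ ((2:ℝ)/3) = (3/2) * ((3/2:ℝ) ^ ((1:ℝ)/3)) := by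
      rw [show (9/4:ℝ) = (3/2)^(2:ℕ) by norm_num, ← Real.rpow_natCast ((3:ℝ)/2) 2,
        ← Real.rpow_mul (by norm_num),
        show ((2:ℕ):ℝ) * ((2:ℝ)/3) = 1 + (1:ℝ)/3 by norm_num,
        Real.rpow_add (by norm_num), Real.rpow_one]
    have e2 : (π^3:ℝ) ^ ((2:ℝ)/3) = π^2 := by
      rw [← Real.rpow_natCast π 3, ← Real.rpow_mul hpi.le,
        show ((3:ℕ):ℝ) * ((2:ℝ)/3) = ((2:ℕ):ℝ) by norm_num, Real.rpow_natCast]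
    rw [e1, e2]
  rw [h1, h2, h3]; ring

lemma hP52 : π ^ ((5:ℝ)/2) = Real.sqrt π * π^2 := by
  rw [show (5:ℝ)/2 = 1/2 + ((2:ℕ):ℝ) by norm_num, Real.rpow_add Real.pi_pos,
    Real.rpow_natCast, ← Real.sqrt_eq_rpow]

lemma hrefl : Real.Gamma (1/6) * Real.Gamma (5/6) = 2 * π := by
  have h := Real.Gamma_mul_Gamma_one_sub (1/6)
  rw [show (1 - 1/6 : ℝ) = 5/6 by norm_num] at h
  rw [h, show (π * (1/6) : ℝ) = π/6 by ring, Real.sin_pi_div_six]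
  ring


/-- The integrals `∫_{-1}^∞ (z³+1)^{-1/2} dz` and `∫_{1}^∞ (z³-1)^{-1/2} dz` converge
and `(1/2)p*^{-2/3}` times them admit explicit closed-form evaluations in terms of
the Gamma function. -/
theorem Cpm_closed_form :
    IntegrableOn (fun z : ℝ => 1 / Real.sqrt (z ^ 3 + 1)) (Set.Ioi (-1 : ℝ)) ∧
    IntegrableOn (fun z : ℝ => 1 / Real.sqrt (z ^ 3 - 1)) (Set.Ioi (1 : ℝ)) ∧
    (1 / 2) * pStar ^ (-(2 : ℝ) / 3) *
        (∫ z in Set.Ioi (-1 : ℝ), 1 / Real.sqrt (z ^ 3 + 1)) =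
      3 * (3 / 2) ^ ((1 : ℝ) / 3) * π ^ ((5 : ℝ) / 2) * Real.Gamma (1 / 3) /
        (4 * Real.Gamma (1 / 4) ^ ((8 : ℝ) / 3) * Real.Gamma (5 / 6)) ∧
    (1 / 2) * pStar ^ (-(2 : ℝ) / 3) *
        (∫ z in Set.Ioi (1 : ℝ), 1 / Real.sqrt (z ^ 3 - 1)) =
      3 * (3 / 2) ^ ((1 : ℝ) / 3) * π ^ ((5 : ℝ) / 2) * Real.Gamma (7 / 6) /
        (2 * Real.Gamma (1 / 4) ^ ((8 : ℝ) / 3) * Real.Gamma (2 / 3)) := by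
  obtain ⟨hInt1, hVal1⟩ := case1
  obtain ⟨hInt2, hVal2⟩ := case2
  have hpi := Real.pi_pos
  have hs : 0 < Real.sqrt π := Real.sqrt_pos.mpr hpi
  have hs2 : Real.sqrt π ^ 2 = π := Real.sq_sqrt hpi.le
  have hG14 : 0 < Real.Gamma (1/4) := Real.Gamma_pos_of_pos (by norm_num)
  have hG16 : 0 < Real.Gamma (1/6) := Real.Gamma_pos_of_pos (by norm_num)
  have hG23 : 0 < Real.Gamma (2/3) := Real.Gamma_pos_of_pos (by norm_num)
  have hG56 : 0 < Real.Gamma (5/6) := Real.Gamma_pos_of_pos (by norm_num)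
  have hA : 0 < Real.Gamma (1/4) ^ ((8:ℝ)/3) := Real.rpow_pos_of_pos hG14 _
  have hG76 : Real.Gamma (7/6) = (1/6) * Real.Gamma (1/6) := by
    rw [show (7/6:ℝ) = 1/6 + 1 by norm_num, Real.Gamma_add_one (by norm_num)]
  have hr := hrefl
  refine ⟨hInt1, hInt2, ?_, ?_⟩
  · rw [hVal1, hPow, hP52, show (1/3 + 1/2 : ℝ) = 5/6 by norm_num,
      show (1/6 + 1/3 : ℝ) = 1/2 by norm_num, Real.Gamma_one_half_eq]
    field_simp
    linear_combination 4 * hr - 8 * hs2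
  · rw [hVal2, hPow, hP52, show (1/6 + 1/2 : ℝ) = 2/3 by norm_num,
      Real.Gamma_one_half_eq, hG76]
    field_simp
    ring
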